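/- arXiv:1404.7559 — 5 statements merged into one kernel-verified Lean document; each statement's English description precedes it below -/
import Mathlib

section
/- If S is a dominating set of a connected graph G and C, C' are two distinct connected components of G[S], then there exist at most two vertices outside S whose addition to S merges C with some other component of G[S]: either a single vertex v adjacent to both C and another component, or two adjacent vertices v, w with v adjacent to C and w adjacent to another component. -/
open SimpleGraph

private lemma stmt_1_aux {V : Type*} (G : SimpleGraph V) (S : Set V)
    (hdom : ∀ v, v ∉ S → ∃ u ∈ S, G.Adj v u)
    (C : (G.induce S).ConnectedComponent) (t : V) (ht : t ∈ S)
    (hc' : (G.induce S).connectedComponentMk ⟨t, ht⟩ ≠ C) :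
    ∀ (a : V) (p : G.Walk a t),
      ((∃ ha : a ∈ S, (G.induce S).connectedComponentMk ⟨a, ha⟩ = C) ∨
       (a ∉ S ∧ ∃ x : S, G.Adj a ↑x ∧ (G.induce S).connectedComponentMk x = C)) →
    ((∃ v, v ∉ S ∧
      (∃ x : S, G.Adj v ↑x ∧ (G.induce S).connectedComponentMk x = C) ∧
      (∃ D, D ≠ C ∧ ∃ y : S, G.Adj v ↑y ∧ (G.induce S).connectedComponentMk y = D)) ∨
    (∃ v w, v ∉ S ∧ w ∉ S ∧ G.Adj v w ∧
      (∃ x : S, G.Adj v ↑x ∧ (G.induce S).connectedComponentMk x = C) ∧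
      (∃ D, D ≠ C ∧ ∃ y : S, G.Adj w ↑y ∧ (G.induce S).connectedComponentMk y = D))) := by
  intro a p
  induction p with
  | nil =>
    rintro (⟨ha, hc⟩ | ⟨ha, _⟩)
    · exact absurd hc hc'
    · exact absurd ht ha
  | @cons a b _ h p ih =>
    rintro (⟨ha, hc⟩ | ⟨ha, x, hax, hx⟩)
    · by_cases hb : b ∈ S
      · apply ih ht hc'
        left
        refine ⟨hb, ?_⟩
        have hadj : (G.induce S).Adj ⟨b, hb⟩ ⟨a, ha⟩ := h.symm
        exact (ConnectedComponent.sound hadj.reachable).trans hc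
      · exact ih ht hc' (Or.inr ⟨hb, ⟨a, ha⟩, h.symm, hc⟩)
    · by_cases hb : b ∈ S
      · by_cases hbc : (G.induce S).connectedComponentMk ⟨b, hb⟩ = C
        · exact ih ht hc' (Or.inl ⟨hb, hbc⟩)
        · exact Or.inl ⟨a, ha, ⟨x, hax, hx⟩,
            ⟨(G.induce S).connectedComponentMk ⟨b, hb⟩, hbc, ⟨b, hb⟩, h, rfl⟩⟩
      · obtain ⟨u, hu, hbu⟩ := hdom b hb
        by_cases huc : (G.induce S).connectedComponentMk ⟨u, hu⟩ = C
        · exact ih ht hc' (Or.inr ⟨hb, ⟨u, hu⟩, hbu, huc⟩)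
        · exact Or.inr ⟨a, b, ha, hb, h, ⟨x, hax, hx⟩,
            (G.induce S).connectedComponentMk ⟨u, hu⟩, huc, ⟨u, hu⟩, hbu, rfl⟩

/-- If `S` is a dominating set of a connected graph `G` and `C, C'` are two distinct
connected components of `G[S]`, then either a single vertex `v ∉ S` adjacent to `C` and to
another component, or two adjacent vertices `v, w ∉ S` with `v` adjacent to `C` and `w`
adjacent to another component, merges `C` with some other component of `G[S]`. -/
theorem stmt_1 {V : Type*} [Fintype V] (G : SimpleGraph V) (S : Set V)
    (hGconn : G.Connected)
    (hdom : ∀ v, v ∉ S → ∃ u ∈ S, G.Adj v u)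
    (C C' : (G.induce S).ConnectedComponent) (hCC : C ≠ C') :
    (∃ v, v ∉ S ∧
      (∃ x : S, G.Adj v ↑x ∧ (G.induce S).connectedComponentMk x = C) ∧
      (∃ D, D ≠ C ∧ ∃ y : S, G.Adj v ↑y ∧ (G.induce S).connectedComponentMk y = D)) ∨
    (∃ v w, v ∉ S ∧ w ∉ S ∧ G.Adj v w ∧
      (∃ x : S, G.Adj v ↑x ∧ (G.induce S).connectedComponentMk x = C) ∧
      (∃ D, D ≠ C ∧ ∃ y : S, G.Adj w ↑y ∧ (G.induce S).connectedComponentMk y = D)) := by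
  obtain ⟨c, hc⟩ := C.exists_rep
  obtain ⟨c', hc'⟩ := C'.exists_rep
  obtain ⟨p⟩ := hGconn.preconnected (↑c : V) (↑c')
  exact stmt_1_aux G S hdom C ↑c' c'.2
    (fun h => hCC (hc'.symm.trans h).symm) ↑c p
    (Or.inl ⟨c.2, hc⟩)
end

section
/- Let T be a finite set of weighted elements and X₁,…,X_ℓ subsets of T such that each element of T belongs to at most 2 of the X_i. Suppose there are at least N/2 'components' each of which is covered (satisfied) by at least one X_i, and each X_i distributes half its total weight equally among the components it satisfies. If every X_i has efficiency |Φ(X_i)|/Cost(X_i) < N/(4·W), where W = Σ_{v∈T} c(v), then summing the distributed costs over all satisfied components exceeds W, a contradiction; hence some X_i has efficiency at least N/(4W). -/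
/-- Weighted covering lemma: if each element of `T` lies in at most 2 of the stars `X i`,
each of at least `N/2` components is satisfied by some star, and `W = Σ_{v∈T} c v`, then
some star has efficiency `|Φ(X i)| / Cost(X i) ≥ N / (4W)`. -/
theorem stmt_3 {V Comp : Type*} [DecidableEq V] (T : Finset V) (c : V → ℝ)
    (hc : ∀ v ∈ T, 0 < c v) (ℓ : ℕ) (X : Fin ℓ → Finset V) (Φ : Fin ℓ → Finset Comp)
    (hsub : ∀ i, X i ⊆ T) (hne : ∀ i, (X i).Nonempty) (hΦ : ∀ i, (Φ i).Nonempty)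
    (hmult : ∀ v ∈ T, (Finset.univ.filter fun i => v ∈ X i).card ≤ 2)
    (N : ℕ) (hN : 0 < N) (U : Finset Comp) (hU : N ≤ 2 * U.card)
    (hcover : ∀ Cc ∈ U, ∃ i, Cc ∈ Φ i) :
    ∃ i, (N : ℝ) / (4 * ∑ v ∈ T, c v) ≤ (Φ i).card / ∑ v ∈ X i, c v := by
  classical
  -- ℓ > 0
  have hℓ : 0 < ℓ := by
    rcases Nat.eq_zero_or_pos ℓ with h0 | h0
    · exfalso
      have hUe : U = ∅ := by
        by_contra hU'
        obtain ⟨C, hC⟩ := Finset.nonempty_of_ne_empty hU'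
        obtain ⟨i, _⟩ := hcover C hC
        exact absurd i.2 (by omega)
      rw [hUe] at hU; simp at hU; omega
    · exact h0
  set i0 : Fin ℓ := ⟨0, hℓ⟩
  set W : ℝ := ∑ v ∈ T, c v with hWdef
  have hTne : T.Nonempty := by
    obtain ⟨v, hv⟩ := hne i0; exact ⟨v, hsub i0 hv⟩
  have hW : 0 < W := Finset.sum_pos hc hTne
  have hCost : ∀ i, 0 < ∑ v ∈ X i, c v :=
    fun i => Finset.sum_pos (fun v hv => hc v (hsub i hv)) (hne i)
  have hΦpos : ∀ i, (0:ℝ) < (Φ i).card := fun i => by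
    exact_mod_cast Finset.card_pos.mpr (hΦ i)
  by_contra hcon
  push_neg at hcon
  have key : ∀ i, 4 * W / N < (∑ v ∈ X i, c v) / (Φ i).card := by
    intro i
    have h := hcon i
    rw [div_lt_div_iff₀ (hCost i) (by positivity : (0:ℝ) < 4 * W)] at h
    rw [div_lt_div_iff₀ (by exact_mod_cast hN : (0:ℝ) < (N:ℝ)) (hΦpos i)]
    nlinarith [h]
  -- choice function
  let g : Comp → Fin ℓ := fun C => if h : ∃ i, C ∈ Φ i then h.choose else i0
  have hg : ∀ C ∈ U, C ∈ Φ (g C) := by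
    intro C hC
    have h := hcover C hC
    simp only [g, dif_pos h]
    exact h.choose_spec
  set F : Fin ℓ → ℝ := fun i => (∑ v ∈ X i, c v) / (Φ i).card with hF
  -- lower bound on S
  have hUne : U.Nonempty := Finset.card_pos.mp (by omega)
  have hlow : 2 * W < ∑ C ∈ U, F (g C) := by
    have h1 : (U.card : ℝ) * (4 * W / N) < ∑ C ∈ U, F (g C) := by
      have := Finset.sum_lt_sum_of_nonempty hUne (fun C (_ : C ∈ U) => key (g C))
      rwa [Finset.sum_const, nsmul_eq_mul] at this
    have h2 : 2 * W ≤ (U.card : ℝ) * (4 * W / N) := by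
      have hUc : (N : ℝ) ≤ 2 * U.card := by exact_mod_cast hU
      have hNpos : (0:ℝ) < (N:ℝ) := by exact_mod_cast hN
      have hre : (U.card : ℝ) * (4 * W / N) = (U.card * (4 * W)) / N := by ring
      rw [hre, le_div_iff₀ hNpos]
      nlinarith
    linarith
  -- upper bound on S
  have hup : ∑ C ∈ U, F (g C) ≤ 2 * W := by
    have hfib : ∑ C ∈ U, F (g C) = ∑ i, ∑ C ∈ U.filter (fun C => g C = i), F (g C) :=
      (Finset.sum_fiberwise U g (fun C => F (g C))).symm
    rw [hfib]
    have step1 : ∀ i : Fin ℓ, ∑ C ∈ U.filter (fun C => g C = i), F (g C)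
        ≤ ∑ v ∈ X i, c v := by
      intro i
      have heq : ∑ C ∈ U.filter (fun C => g C = i), F (g C)
          = (U.filter (fun C => g C = i)).card * F i := by
        rw [Finset.sum_congr rfl (fun C hC => by
          rw [(Finset.mem_filter.mp hC).2])]
        rw [Finset.sum_const, nsmul_eq_mul]
      rw [heq]
      have hsub' : U.filter (fun C => g C = i) ⊆ Φ i := by
        intro C hC
        obtain ⟨hC1, hC2⟩ := Finset.mem_filter.mp hC
        have := hg C hC1
        rwa [hC2] at this
      have hcard : ((U.filter (fun C => g C = i)).card : ℝ) ≤ (Φ i).card := by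
        exact_mod_cast Finset.card_le_card hsub'
      have hFnn : 0 ≤ F i := le_of_lt (by
        exact div_pos (hCost i) (hΦpos i))
      calc ((U.filter (fun C => g C = i)).card : ℝ) * F i
          ≤ (Φ i).card * F i := by
            exact mul_le_mul_of_nonneg_right hcard hFnn
        _ = ∑ v ∈ X i, c v := by
            rw [hF]
            field_simp
    calc ∑ i, ∑ C ∈ U.filter (fun C => g C = i), F (g C)
        ≤ ∑ i, ∑ v ∈ X i, c v := Finset.sum_le_sum (fun i _ => step1 i)
      _ = ∑ i : Fin ℓ, ∑ v ∈ T, if v ∈ X i then c v else 0 := by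
          refine Finset.sum_congr rfl (fun i _ => ?_)
          rw [← Finset.sum_filter]
          congr 1
          ext v
          simp only [Finset.mem_filter]
          exact ⟨fun h => ⟨hsub i h, h⟩, fun h => h.2⟩
      _ = ∑ v ∈ T, ∑ i : Fin ℓ, if v ∈ X i then c v else 0 := Finset.sum_comm
      _ ≤ ∑ v ∈ T, 2 * c v := by
          refine Finset.sum_le_sum (fun v hv => ?_)
          rw [← Finset.sum_filter, Finset.sum_const, nsmul_eq_mul]
          have h2 : ((Finset.univ.filter fun i => v ∈ X i).card : ℝ) ≤ 2 := by
            exact_mod_cast hmult v hv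
          nlinarith [le_of_lt (hc v hv)]
      _ = 2 * W := by rw [← Finset.mul_sum]
  linarith
end

section
/- In the sequential star-covering procedure over the white vertices T of an optimal CDS, every unsatisfied component C gets satisfied by at least one star in the produced collection. -/
open Finset

/-- A star `X` satisfies component `C` if `C` is unsatisfied, some node of `X` is adjacent to
`C`, and some node of `X` is adjacent to a different component. -/
abbrev SatC {V Comp : Type*} (adjC : V → Comp → Prop) (unsat : Comp → Prop)
    (X : Finset V) (C : Comp) : Prop :=
  unsat C ∧ (∃ x ∈ X, adjC x C) ∧ ∃ C', C' ≠ C ∧ ∃ y ∈ X, adjC y C'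

/-- One step of the sequential star-covering procedure. -/
def coverStep {V : Type*} [DecidableEq V] [Fintype V] (G : SimpleGraph V)
    [DecidableRel G.Adj] (lonely : V → Prop) [DecidablePred lonely]
    (Sat : Finset V → Prop) [DecidablePred Sat]
    (acc : List (V × Finset V) × Finset V) (v : V) : List (V × Finset V) × Finset V :=
  let Xv : Finset V := insert v ((G.neighborFinset v).filter fun w => lonely w ∧ w ∉ acc.2)
  if Sat Xv then ((v, Xv) :: acc.1, acc.2 ∪ Xv.erase v) else acc


section Aux

variable {V : Type*} [DecidableEq V] [Fintype V] (G : SimpleGraph V) [DecidableRel G.Adj]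
  (lonely : V → Prop) [DecidablePred lonely] (Sat : Finset V → Prop) [DecidablePred Sat]

lemma coverStep_fst_mono (acc : List (V × Finset V) × Finset V) (a : V)
    {p : V × Finset V} (hp : p ∈ acc.1) : p ∈ (coverStep G lonely Sat acc a).1 := by
  unfold coverStep
  dsimp only
  split <;> simp [hp]

lemma foldl_fst_mono (l : List V) (acc : List (V × Finset V) × Finset V)
    {p : V × Finset V} (hp : p ∈ acc.1) :
    p ∈ (l.foldl (coverStep G lonely Sat) acc).1 := by
  induction l generalizing acc with
  | nil => exact hp
  | cons a l ih => exact ih _ (coverStep_fst_mono G lonely Sat acc a hp)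

lemma coverStep_snd_mono (acc : List (V × Finset V) × Finset V) (a : V) :
    acc.2 ⊆ (coverStep G lonely Sat acc a).2 := by
  unfold coverStep
  dsimp only
  split
  · exact Finset.subset_union_left
  · exact Finset.Subset.refl _

lemma foldl_snd_mono (l : List V) (acc : List (V × Finset V) × Finset V) :
    acc.2 ⊆ (l.foldl (coverStep G lonely Sat) acc).2 := by
  induction l generalizing acc with
  | nil => exact Finset.Subset.refl _
  | cons a l ih => exact (coverStep_snd_mono G lonely Sat acc a).trans (ih _)

lemma foldl_inv (l : List V) (acc : List (V × Finset V) × Finset V)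
    (h : ∀ x ∈ acc.2, ∃ p ∈ acc.1, x ∈ p.2 ∧ Sat p.2) :
    ∀ x ∈ (l.foldl (coverStep G lonely Sat) acc).2,
      ∃ p ∈ (l.foldl (coverStep G lonely Sat) acc).1, x ∈ p.2 ∧ Sat p.2 := by
  induction l generalizing acc with
  | nil => exact h
  | cons a l ih =>
    apply ih
    intro x hx
    unfold coverStep at hx ⊢
    dsimp only at hx ⊢
    split at hx
    · rename_i hSat
      simp only [if_pos hSat]
      rcases Finset.mem_union.mp hx with hx | hx
      · obtain ⟨p, hp, hxp, hsp⟩ := h x hx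
        exact ⟨p, List.mem_cons_of_mem _ hp, hxp, hsp⟩
      · exact ⟨(a, _), List.mem_cons_self, Finset.mem_of_mem_erase hx, hSat⟩
    · rename_i hSat
      simp only [if_neg hSat]
      exact h x hx

lemma foldl_key {Comp : Type*} [DecidableEq Comp] [Fintype Comp]
    (adjC : V → Comp → Prop) [∀ v C, Decidable (adjC v C)]
    (unsat : Comp → Prop) [DecidablePred unsat]
    (C : Comp) (u v : V)
    (hS : ∀ S : Finset V, v ∉ S →
      SatC adjC unsat (insert u ((G.neighborFinset u).filter fun w => lonely w ∧ w ∉ S)) C)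
    (l : List V) (acc : List (V × Finset V) × Finset V) (hu : u ∈ l)
    (hv : v ∉ (l.foldl (coverStep G lonely (fun X => ∃ D, SatC adjC unsat X D)) acc).2) :
    ∃ p ∈ (l.foldl (coverStep G lonely (fun X => ∃ D, SatC adjC unsat X D)) acc).1,
      SatC adjC unsat p.2 C := by
  induction l generalizing acc with
  | nil => cases hu
  | cons a l ih =>
    rcases List.mem_cons.mp hu with rfl | hu'
    · have hvacc : v ∉ acc.2 := fun h => hv
        (foldl_snd_mono G lonely _ l _ (coverStep_snd_mono G lonely _ acc u h))
      have hsat := hS acc.2 hvacc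
      set Xu : Finset V :=
        insert u ((G.neighborFinset u).filter fun w => lonely w ∧ w ∉ acc.2) with hXu
      have hstep : coverStep G lonely (fun X => ∃ D, SatC adjC unsat X D) acc u
          = ((u, Xu) :: acc.1, acc.2 ∪ Xu.erase u) := by
        unfold coverStep
        dsimp only
        rw [if_pos ⟨C, hsat⟩]
      refine ⟨(u, Xu), ?_, hsat⟩
      rw [List.foldl_cons, hstep]
      exact foldl_fst_mono G lonely _ l _ (List.mem_cons_self)
    · exact ih _ hu' hv

end Aux

/-- In the sequential star-covering procedure over the white vertices `T` of an optimal CDS,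
every unsatisfied component `C` gets satisfied by at least one star in the produced
collection. -/
theorem stmt_11 {V Comp : Type*} [DecidableEq V] [Fintype V] [DecidableEq Comp] [Fintype Comp]
    (G : SimpleGraph V) [DecidableRel G.Adj]
    (adjC : V → Comp → Prop) [∀ v C, Decidable (adjC v C)]
    (unsat : Comp → Prop) [DecidablePred unsat]
    (lonely : V → Prop) [DecidablePred lonely]
    (hlonely : ∀ v, lonely v ↔
      ((∃ C, adjC v C ∧ unsat C) ∧ ∀ C C', adjC v C → adjC v C' → C = C'))
    (T : Finset V) (order : List V) (horder : order.Nodup)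
    (hTorder : ∀ v, v ∈ order ↔ v ∈ T)
    (hOPT : ∀ C, unsat C → ∃ v ∈ T, adjC v C ∧
      ((∃ C', C' ≠ C ∧ adjC v C') ∨
        ∃ w ∈ T, G.Adj v w ∧ ∃ C', C' ≠ C ∧ adjC w C')) :
    ∀ C, unsat C →
      ∃ p ∈ (order.foldl
          (coverStep G lonely (fun X => ∃ C, SatC adjC unsat X C)) ([], ∅)).1,
        SatC adjC unsat p.2 C := by
  intro C hC
  obtain ⟨v, hvT, hvC, hcase⟩ := hOPT C hC
  by_cases hv : v ∈ (order.foldl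
      (coverStep G lonely (fun X => ∃ C, SatC adjC unsat X C)) ([], ∅)).2
  · obtain ⟨p, hp, hvp, D, hDun, ⟨x, hx, hxD⟩, D', hDD', y, hy, hyD'⟩ :=
      foldl_inv G lonely _ order ([], (∅ : Finset V)) (by simp) v hv
    refine ⟨p, hp, hC, ⟨v, hvp, hvC⟩, ?_⟩
    by_cases hDC : D = C
    · exact ⟨D', hDC ▸ hDD', y, hy, hyD'⟩
    · exact ⟨D, hDC, x, hx, hxD⟩
  · by_cases hA : ∃ C', C' ≠ C ∧ adjC v C'
    · exact foldl_key G lonely adjC unsat C v v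
        (fun S _ => ⟨hC, ⟨v, Finset.mem_insert_self _ _, hvC⟩,
          hA.imp fun C' h => ⟨h.1, v, Finset.mem_insert_self _ _, h.2⟩⟩)
        order _ ((hTorder v).mpr hvT) hv
    · have hvlone : lonely v := (hlonely v).mpr ⟨⟨C, hvC, hC⟩, fun C1 C2 h1 h2 => by
        have e1 : C1 = C := by
          by_contra h; exact hA ⟨C1, h, h1⟩
        have e2 : C2 = C := by
          by_contra h; exact hA ⟨C2, h, h2⟩
        rw [e1, e2]⟩
      rcases hcase with hA' | ⟨w, hwT, hadj, C', hC'C, hwC'⟩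
      · exact absurd hA' hA
      · refine foldl_key G lonely adjC unsat C w v ?_ order _ ((hTorder w).mpr hwT) hv
        intro S hvS
        refine ⟨hC, ⟨v, ?_, hvC⟩, C', hC'C, w, Finset.mem_insert_self _ _, hwC'⟩
        refine Finset.mem_insert_of_mem (Finset.mem_filter.mpr ⟨?_, hvlone, hvS⟩)
        exact (SimpleGraph.mem_neighborFinset G w v).mpr hadj.symm
end

section
/- In a cycle of 2k weighted nodes where k nodes have weight 1 and k have weight W (alternating), plus a center node of weight n connected to all weight-1 nodes, the minimum-weight dominating set consisting of the weight-1 nodes, when connected greedily by adding for each component the lightest connecting path of at most 2 intermediate nodes, incurs total weight Θ(k·W), whereas adding the single center node yields a CDS of total weight at most 2k + n. -/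
/-- Vertices: a cycle on `2k` nodes plus a center node. -/
def CycVertex (k : ℕ) := Fin (2 * k) ⊕ Unit

instance (k : ℕ) : Fintype (CycVertex k) := by unfold CycVertex; infer_instance
instance (k : ℕ) : DecidableEq (CycVertex k) := by unfold CycVertex; infer_instance

/-- Cycle edges `v_i v_{i+1}` (mod `2k`), and the center adjacent to all even-indexed
(weight-1) nodes. -/
def cycRel (k : ℕ) : CycVertex k → CycVertex k → Prop
  | Sum.inl i, Sum.inl j => ((i : ℕ) + 1) % (2 * k) = (j : ℕ)
  | Sum.inr _, Sum.inl i => (i : ℕ) % 2 = 0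
  | _, _ => False

def cycGraph (k : ℕ) : SimpleGraph (CycVertex k) := SimpleGraph.fromRel (cycRel k)

/-- Alternating weights `1` and `W` on the cycle; weight `n = 2k+1` on the center. -/
noncomputable def cycWeight (k : ℕ) (W : ℝ) : CycVertex k → ℝ
  | Sum.inl i => if (i : ℕ) % 2 = 0 then 1 else W
  | Sum.inr _ => (2 * k + 1 : ℝ)

lemma range_odds_card (n : ℕ) : (((Finset.range (2*n)).filter fun i => i % 2 = 1)).card = n := by
  induction n with
  | zero => simp
  | succ n ih =>
    have : 2 * (n+1) = (2*n + 1) + 1 := by ring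
    rw [this, Finset.range_add_one, Finset.range_add_one, Finset.filter_insert, Finset.filter_insert]
    have h1 : (2*n + 1) % 2 = 1 := by omega
    have h2 : ¬ ((2*n) % 2 = 1) := by omega
    rw [if_pos h1, if_neg h2, Finset.card_insert_of_notMem (by simp), ih]

lemma fin_odds_card (k : ℕ) :
    ((Finset.univ : Finset (Fin (2*k))).filter fun i => i.val % 2 = 1).card = k := by
  have : ((Finset.univ : Finset (Fin (2*k))).filter fun i => i.val % 2 = 1).card
      = (((Finset.range (2*k)).filter fun i => i % 2 = 1)).card := by
    refine Finset.card_bij (fun (i : Fin (2*k)) _ => (i : ℕ)) ?_ ?_ ?_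
    · intro x hx
      simp only [Finset.mem_filter, Finset.mem_univ, true_and] at hx
      simp only [Finset.mem_filter, Finset.mem_range]
      exact ⟨x.2, hx⟩
    · intro x _ y _ h; exact Fin.val_injective h
    · intro y hy
      simp only [Finset.mem_filter, Finset.mem_range] at hy
      exact ⟨⟨y, hy.1⟩, by simp [hy.2], rfl⟩
  rw [this, range_odds_card]

section Invariant
variable {k : ℕ} (D : Finset (CycVertex k)) (a b : Fin (2*k))

/-- invariant predicate: strictly between the two missing odd vertices -/
def cycPred (a b : Fin (2*k)) : CycVertex k → Prop
  | Sum.inl i => (a : ℕ) < (i : ℕ) ∧ (i : ℕ) < (b : ℕ)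
  | Sum.inr _ => False

lemma cycRel_step {i j : Fin (2*k)} (hk : 1 ≤ k)
    (hr : ((i : ℕ) + 1) % (2 * k) = (j : ℕ))
    (hab : (a:ℕ) < (b:ℕ))
    (hia : (i:ℕ) ≠ (a:ℕ)) (hib : (i:ℕ) ≠ (b:ℕ))
    (hja : (j:ℕ) ≠ (a:ℕ)) (hjb : (j:ℕ) ≠ (b:ℕ)) :
    (cycPred a b (Sum.inl i) ↔ cycPred a b (Sum.inl j)) := by
  have hi2 := i.2; have hj2 := j.2; have ha2 := a.2; have hb2 := b.2
  unfold cycPred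
  rcases lt_or_eq_of_le (Nat.succ_le_of_lt hi2) with h | h
  · have : ((i:ℕ)+1) % (2*k) = (i:ℕ)+1 := Nat.mod_eq_of_lt h
    omega
  · have heq : (i:ℕ)+1 = 2*k := h
    have : ((i:ℕ)+1) % (2*k) = 0 := by rw [heq]; exact Nat.mod_self _
    omega

lemma reach_invariant (hk : 1 ≤ k) (hnr : Sum.inr () ∉ D)
    (hab : (a:ℕ) < (b:ℕ)) (haD : Sum.inl a ∉ D) (hbD : Sum.inl b ∉ D)
    (x y : (D : Set (CycVertex k)))
    (h : ((cycGraph k).induce (D : Set (CycVertex k))).Reachable x y) :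
    (cycPred a b x.val ↔ cycPred a b y.val) := by
  obtain ⟨w⟩ := h
  induction w with
  | nil => rfl
  | @cons u v p hadj _ ih =>
    refine Iff.trans ?_ ih
    have hadj' : (cycGraph k).Adj u.val v.val := hadj
    obtain ⟨hne, hrel⟩ := hadj'
    have hu : u.val ∈ D := u.2
    have hv : v.val ∈ D := v.2
    -- both must be inl
    obtain ⟨i, hi⟩ : ∃ i, u.val = Sum.inl i := by
      cases hiu : u.val with
      | inl i => exact ⟨i, rfl⟩
      | inr x => exact absurd (hiu ▸ hu) (by cases x; exact hnr)
    obtain ⟨j, hj⟩ : ∃ j, v.val = Sum.inl j := by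
      cases hiv : v.val with
      | inl i => exact ⟨i, rfl⟩
      | inr x => exact absurd (hiv ▸ hv) (by cases x; exact hnr)
    rw [hi, hj]
    rw [hi] at hu; rw [hj] at hv
    have hia : (i:ℕ) ≠ (a:ℕ) := fun h => haD (by rwa [← Fin.val_injective h])
    have hib : (i:ℕ) ≠ (b:ℕ) := fun h => hbD (by rwa [← Fin.val_injective h])
    have hja : (j:ℕ) ≠ (a:ℕ) := fun h => haD (by rwa [← Fin.val_injective h])
    have hjb : (j:ℕ) ≠ (b:ℕ) := fun h => hbD (by rwa [← Fin.val_injective h])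
    rw [hi, hj] at hrel
    rcases hrel with hr | hr
    · exact cycRel_step a b hk hr hab hia hib hja hjb
    · exact (cycRel_step a b hk hr hab hja hjb hia hib).symm

end Invariant
lemma cyc_missing_contra (k : ℕ) (hk : 1 ≤ k) (D : Finset (CycVertex k))
    (hnr : Sum.inr () ∉ D)
    (hconn : ((cycGraph k).induce (D : Set (CycVertex k))).Connected)
    (hev : ∀ i : Fin (2 * k), (i : ℕ) % 2 = 0 → Sum.inl i ∈ D)
    (a b : Fin (2 * k)) (hab : a.val < b.val)
    (haO : a.val % 2 = 1) (hbO : b.val % 2 = 1)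
    (haD : Sum.inl a ∉ D) (hbD : Sum.inl b ∉ D) : False := by
  have ha2 := a.2
  have hb2 := b.2
  have hx1 : a.val + 1 < 2 * k := by omega
  set xi : Fin (2 * k) := ⟨a.val + 1, hx1⟩ with hxi
  have hxev : xi.val % 2 = 0 := by show (a.val + 1) % 2 = 0; omega
  have hxD : Sum.inl xi ∈ D := hev _ hxev
  set yi : Fin (2 * k) := ⟨(b.val + 1) % (2 * k), Nat.mod_lt _ (by omega)⟩ with hyi
  have hyval : yi.val = (b.val + 1) % (2 * k) := rfl
  have hyev : yi.val % 2 = 0 := by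
    rw [hyval, Nat.mod_mod_of_dvd _ ⟨k, rfl⟩]; omega
  have hyD : Sum.inl yi ∈ D := hev _ hyev
  have hr := hconn.preconnected ⟨Sum.inl xi, Finset.mem_coe.mpr hxD⟩
      ⟨Sum.inl yi, Finset.mem_coe.mpr hyD⟩
  have hiff := reach_invariant D a b hk hnr hab haD hbD _ _ hr
  have hx : cycPred a b (Sum.inl xi) := by
    show a.val < xi.val ∧ xi.val < b.val
    have : xi.val = a.val + 1 := rfl
    omega
  have hy : a.val < yi.val ∧ yi.val < b.val := hiff.mp hx
  rcases Nat.lt_or_ge (b.val + 1) (2 * k) with h | h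
  · rw [Nat.mod_eq_of_lt h] at hyval
    omega
  · have hyval0 : yi.val = 0 := by
      rw [hyval, show b.val + 1 = 2 * k by omega]
      exact Nat.mod_self _
    omega
open scoped Classical in
/-- In the cycle-plus-center example: the set of even-indexed (weight-1) nodes together with
the center `s` is a connected dominating set of weight at most `2k + n ≤ 2n` (`n = 2k+1`),
while any connected dominating set containing all even-indexed nodes but not the center must
contain at least `k−1` of the weight-`W` nodes, hence has weight at least `(k−1)·W`. -/
theorem stmt_13 (k : ℕ) (hk : 2 ≤ k) (W : ℝ) (hW : 1 ≤ W) :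
    (∀ v, v ∉ ((Finset.univ.filter fun v : CycVertex k =>
          (∃ i : Fin (2 * k), v = Sum.inl i ∧ (i : ℕ) % 2 = 0) ∨ v = Sum.inr ()) :
        Finset (CycVertex k)) →
      ∃ u ∈ (Finset.univ.filter fun v : CycVertex k =>
          (∃ i : Fin (2 * k), v = Sum.inl i ∧ (i : ℕ) % 2 = 0) ∨ v = Sum.inr ()),
        (cycGraph k).Adj v u) ∧
    ((cycGraph k).induce ((Finset.univ.filter fun v : CycVertex k =>
        (∃ i : Fin (2 * k), v = Sum.inl i ∧ (i : ℕ) % 2 = 0) ∨ v = Sum.inr ()) :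
      Finset (CycVertex k))).Connected ∧
    (∑ v ∈ (Finset.univ.filter fun v : CycVertex k =>
        (∃ i : Fin (2 * k), v = Sum.inl i ∧ (i : ℕ) % 2 = 0) ∨ v = Sum.inr ()),
      cycWeight k W v) ≤ 2 * k + (2 * k + 1) ∧
    ((2 * k + (2 * k + 1) : ℝ) ≤ 2 * (2 * k + 1)) ∧
    (∀ D : Finset (CycVertex k),
      (∀ v, v ∉ D → ∃ u ∈ D, (cycGraph k).Adj v u) →
      ((cycGraph k).induce (D : Set (CycVertex k))).Connected →
      (∀ i : Fin (2 * k), (i : ℕ) % 2 = 0 → Sum.inl i ∈ D) →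
      Sum.inr () ∉ D →
      ((k : ℝ) - 1) * W ≤ ∑ v ∈ D, cycWeight k W v) := by
  have hk0 : 0 < 2 * k := by omega
  set S : Finset (CycVertex k) := Finset.univ.filter fun v : CycVertex k =>
      (∃ i : Fin (2 * k), v = Sum.inl i ∧ (i : ℕ) % 2 = 0) ∨ v = Sum.inr () with hS
  have hmem : ∀ v : CycVertex k, v ∈ S ↔
      ((∃ i : Fin (2 * k), v = Sum.inl i ∧ (i : ℕ) % 2 = 0) ∨ v = Sum.inr ()) := by
    intro v; simp [hS]
  have hcS : Sum.inr () ∈ S := (hmem _).mpr (Or.inr rfl)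
  refine ⟨?_, ?_, ?_, ?_, ?_⟩
  · -- domination
    intro v hv
    obtain ⟨i, rfl⟩ : ∃ i, v = Sum.inl i := by
      cases v with
      | inl i => exact ⟨i, rfl⟩
      | inr u => cases u; exact absurd hcS (by exact hv)
    have hodd : (i : ℕ) % 2 = 1 := by
      rcases Nat.mod_two_eq_zero_or_one (i : ℕ) with h | h
      · exact absurd ((hmem _).mpr (Or.inl ⟨i, rfl, h⟩)) hv
      · exact h
    refine ⟨Sum.inl ⟨((i : ℕ) + 1) % (2 * k), Nat.mod_lt _ hk0⟩, ?_, ?_⟩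
    · refine (hmem _).mpr (Or.inl ⟨_, rfl, ?_⟩)
      show ((i : ℕ) + 1) % (2 * k) % 2 = 0
      rw [Nat.mod_mod_of_dvd _ ⟨k, rfl⟩]
      omega
    · refine ⟨?_, Or.inl rfl⟩
      intro h
      have := congrArg (fun v : CycVertex k => match v with
        | Sum.inl i => (i : ℕ) % 2 | Sum.inr _ => 0) h
      simp only at this
      rw [Nat.mod_mod_of_dvd _ ⟨k, rfl⟩] at this
      omega
  · -- connectivity
    rw [SimpleGraph.connected_iff]
    have hc' : Sum.inr () ∈ (S : Set (CycVertex k)) := Finset.mem_coe.mpr hcS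
    set c : ((S : Set (CycVertex k))) := ⟨Sum.inr (), hc'⟩ with hcdef
    have hreach : ∀ x : ((S : Set (CycVertex k))),
        ((cycGraph k).induce (S : Set (CycVertex k))).Reachable x c := by
      intro x
      rcases (hmem x.val).mp (Finset.mem_coe.mp x.2) with ⟨i, hx, hev⟩ | hx
      · refine SimpleGraph.Adj.reachable ?_
        show (cycGraph k).Adj x.val c.val
        rw [hx]
        exact ⟨by exact Sum.inl_ne_inr, Or.inr hev⟩
      · have : x = c := Subtype.ext hx
        rw [this]
    refine ⟨fun x y => (hreach x).trans (hreach y).symm, ⟨c⟩⟩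
  · -- sum upper bound
    set A := S.erase (Sum.inr ()) with hA
    have hins : S = insert (Sum.inr ()) A := (Finset.insert_erase hcS).symm
    rw [← Finset.add_sum_erase S _ hcS]
    have hval : ∀ v ∈ A, cycWeight k W v = 1 := by
      intro v hv
      have hv' := Finset.mem_of_mem_erase hv
      have hne := Finset.ne_of_mem_erase hv
      rcases (hmem v).mp hv' with ⟨i, rfl, hev⟩ | h
      · simp [cycWeight, hev]
      · exact absurd h hne
    rw [Finset.sum_congr rfl hval, Finset.sum_const, nsmul_eq_mul, mul_one]
    have hcard : A.card ≤ 2 * k := by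
      have hsub : A ⊆ Finset.univ.image (Sum.inl : Fin (2*k) → CycVertex k) := by
        intro v hv
        rcases (hmem v).mp (Finset.mem_of_mem_erase hv) with ⟨i, rfl, _⟩ | h
        · exact Finset.mem_image.mpr ⟨i, Finset.mem_univ _, rfl⟩
        · exact absurd h (Finset.ne_of_mem_erase hv)
      calc A.card ≤ _ := Finset.card_le_card hsub
        _ ≤ 2 * k := by
          refine Finset.card_image_le.trans ?_
          simp
    have : (A.card : ℝ) ≤ 2 * k := by exact_mod_cast hcard
    show (2 * (k:ℝ) + 1) + A.card ≤ 2 * k + (2 * k + 1)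
    linarith
  · have : (0:ℝ) ≤ (k:ℝ) := Nat.cast_nonneg k
    linarith
  · -- lower bound
    intro D hdom hconn hev hnr
    set O : Finset (Fin (2*k)) := Finset.univ.filter fun i => i.val % 2 = 1 with hO
    have hOcard : O.card = k := fin_odds_card k
    set M : Finset (Fin (2*k)) := O.filter fun i => Sum.inl i ∉ D with hM
    have hMcard : M.card ≤ 1 := by
      by_contra hM1
      obtain ⟨a, ha, b, hb, hne⟩ := Finset.one_lt_card.mp (show 1 < M.card by omega)
      have haO : a.val % 2 = 1 := by
        have := Finset.mem_filter.mp (Finset.mem_filter.mp ha).1; exact this.2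
      have hbO : b.val % 2 = 1 := by
        have := Finset.mem_filter.mp (Finset.mem_filter.mp hb).1; exact this.2
      have haD : Sum.inl a ∉ D := (Finset.mem_filter.mp ha).2
      have hbD : Sum.inl b ∉ D := (Finset.mem_filter.mp hb).2
      have hvne : a.val ≠ b.val := fun h => hne (Fin.val_injective h)
      -- wlog a < b
      rcases Nat.lt_or_ge a.val b.val with hab | hab'
      · exact cyc_missing_contra k (by omega) D hnr hconn hev a b hab haO hbO haD hbD
      · have hab : b.val < a.val := by omega
        exact cyc_missing_contra k (by omega) D hnr hconn hev b a hab hbO haO hbD haD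
    set Din : Finset (Fin (2*k)) := O.filter fun i => Sum.inl i ∈ D with hDin
    have hsplit : Din.card + M.card = O.card := by
      rw [hDin, hM]
      exact Finset.card_filter_add_card_filter_not _
    have hDincard : k - 1 ≤ Din.card := by omega
    set F : Finset (CycVertex k) :=
      D.filter fun v => ∃ i : Fin (2*k), v = Sum.inl i ∧ i.val % 2 = 1 with hF
    have hFsub : Din.image Sum.inl ⊆ F := by
      intro v hv
      obtain ⟨i, hi, rfl⟩ := Finset.mem_image.mp hv
      have hi' := Finset.mem_filter.mp hi
      have hodd := (Finset.mem_filter.mp hi'.1).2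
      exact Finset.mem_filter.mpr ⟨hi'.2, ⟨i, rfl, hodd⟩⟩
    have hFcard : k - 1 ≤ F.card := by
      calc k - 1 ≤ Din.card := hDincard
        _ = (Din.image Sum.inl).card :=
          (Finset.card_image_of_injective _ Sum.inl_injective).symm
        _ ≤ F.card := Finset.card_le_card hFsub
    have hsum1 : ∑ v ∈ F, cycWeight k W v ≤ ∑ v ∈ D, cycWeight k W v := by
      refine Finset.sum_le_sum_of_subset_of_nonneg (Finset.filter_subset _ _) ?_
      intro v _ _
      cases v with
      | inl i =>
        show (0:ℝ) ≤ if (i : ℕ) % 2 = 0 then 1 else W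
        split <;> linarith
      | inr u =>
        show (0:ℝ) ≤ (2 * k + 1 : ℝ)
        positivity
    have hsum2 : ∑ v ∈ F, cycWeight k W v = F.card * W := by
      rw [Finset.sum_congr rfl (fun v hv => ?_), Finset.sum_const, nsmul_eq_mul]
      obtain ⟨i, rfl, hodd⟩ := (Finset.mem_filter.mp hv).2
      simp [cycWeight, hodd]
    have hcast : ((k : ℝ) - 1) ≤ (F.card : ℝ) := by
      have : ((k - 1 : ℕ) : ℝ) ≤ (F.card : ℝ) := by exact_mod_cast hFcard
      have h1 : ((k - 1 : ℕ) : ℝ) = (k : ℝ) - 1 := by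
        rw [Nat.cast_sub (by omega)]; simp
      linarith
    calc ((k : ℝ) - 1) * W ≤ F.card * W := by
          apply mul_le_mul_of_nonneg_right hcast; linarith
      _ = ∑ v ∈ F, cycWeight k W v := hsum2.symm
      _ ≤ _ := hsum1
end

section
/- Replacing the overlay graph H_S (edges between dominating nodes within distance 3) by the sparser overlay H'_S — where each non-dominating node w with S-neighbors s₁,…,s_ℓ contributes the path edges (s₁,s₂),…,(s_{ℓ−1},s_ℓ), each pair of adjacent non-dominating nodes w, w' contributes edges (s^w₁, s^{w'}₁) and (s^w_ℓ, s^{w'}_{ℓ'}), and adjacent dominating nodes are joined directly — yields a connected graph on S, provided G is connected and S is a dominating set of G. -/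
/-- The overlay relation `E'_S`: for each non-dominating node `w` with ordered list `L w` of
its `S`-neighbors, consecutive entries of `L w` are joined; for adjacent non-dominating
`w, w'`, the heads of `L w, L w'` and the last elements of `L w, L w'` are joined; adjacent
dominating nodes are joined directly. -/
def overlayRel {V : Type*} (G : SimpleGraph V) (S : Set V) (L : V → List V)
    (a b : V) : Prop :=
  a ∈ S ∧ b ∈ S ∧
    (G.Adj a b ∨
      (∃ w, w ∉ S ∧ ∃ j : ℕ, (L w)[j]? = some a ∧ (L w)[j + 1]? = some b) ∨
      (∃ w w', w ∉ S ∧ w' ∉ S ∧ G.Adj w w' ∧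
        (((L w).head? = some a ∧ (L w').head? = some b) ∨
          ((L w).getLast? = some a ∧ (L w').getLast? = some b))))

/-- If `G` is connected and `S` is a dominating set of `G`, then the sparse overlay graph
`H'_S` on `S` is connected. -/
theorem stmt_17 {V : Type*} [Fintype V] [DecidableEq V] (G : SimpleGraph V)
    (hG : G.Connected) (S : Set V) (hS : S.Nonempty)
    (hdom : ∀ v, v ∉ S → ∃ u ∈ S, G.Adj v u)
    (L : V → List V)
    (hL : ∀ w, w ∉ S → ((∀ x, x ∈ L w ↔ x ∈ S ∧ G.Adj w x) ∧ (L w).Nodup)) :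
    ((SimpleGraph.fromRel (overlayRel G S L)).induce S).Connected := by
  classical
  set H := ((SimpleGraph.fromRel (overlayRel G S L)).induce S) with hHdef
  have hLS : ∀ w, w ∉ S → ∀ x ∈ L w, x ∈ S := fun w hw x hx => (((hL w hw).1 x).mp hx).1
  have hne : ∀ w, w ∉ S → L w ≠ [] := by
    intro w hw h
    obtain ⟨u, hu, hadj⟩ := hdom w hw
    have : u ∈ L w := ((hL w hw).1 u).mpr ⟨hu, hadj⟩
    simp [h] at this
  have hadjH : ∀ a b : V, ∀ ha : a ∈ S, ∀ hb : b ∈ S, a ≠ b →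
      overlayRel G S L a b → H.Adj ⟨a, ha⟩ ⟨b, hb⟩ := by
    intro a b ha hb hab h
    exact ⟨by simpa using hab, Or.inl h⟩
  have chain : ∀ w, ∀ hw : w ∉ S, ∀ i : ℕ, ∀ hi : i < (L w).length,
      H.Reachable ⟨(L w)[0]'(Nat.lt_of_le_of_lt (Nat.zero_le i) hi),
          hLS w hw _ (List.getElem_mem _)⟩
        ⟨(L w)[i]'hi, hLS w hw _ (List.getElem_mem _)⟩ := by
    intro w hw i
    induction i with
    | zero => intro hi; exact SimpleGraph.Reachable.refl _
    | succ i ih =>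
      intro hi
      have hi' : i < (L w).length := by omega
      refine (ih hi').trans (SimpleGraph.Adj.reachable ?_)
      refine hadjH _ _ _ _ ?_ ?_
      · intro h
        have := (hL w hw).2.getElem_inj_iff.mp h
        omega
      · refine ⟨hLS w hw _ (List.getElem_mem _), hLS w hw _ (List.getElem_mem _),
          Or.inr (Or.inl ⟨w, hw, i, ?_, ?_⟩)⟩
        · exact List.getElem?_eq_getElem hi'
        · exact List.getElem?_eq_getElem hi
  have chain2 : ∀ w, ∀ hw : w ∉ S, ∀ a b, ∀ ha : a ∈ L w, ∀ hb : b ∈ L w,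
      H.Reachable ⟨a, hLS w hw a ha⟩ ⟨b, hLS w hw b hb⟩ := by
    intro w hw a b ha hb
    obtain ⟨i, hi, rfl⟩ := List.getElem_of_mem ha
    obtain ⟨j, hj, rfl⟩ := List.getElem_of_mem hb
    exact (chain w hw i hi).symm.trans (chain w hw j hj)
  let f : V → ↥S := fun v => if h : v ∈ S then ⟨v, h⟩ else
    ⟨(L v).head (hne v h), hLS v h _ (List.head_mem (hne v h))⟩
  have hfS : ∀ v, ∀ hv : v ∈ S, f v = ⟨v, hv⟩ := fun v hv => dif_pos hv
  have hfN : ∀ v, ∀ hv : v ∉ S,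
      f v = ⟨(L v).head (hne v hv), hLS v hv _ (List.head_mem (hne v hv))⟩ :=
    fun v hv => dif_neg hv
  have hstep : ∀ u v, G.Adj u v → H.Reachable (f u) (f v) := by
    have key : ∀ u v, G.Adj u v → u ∉ S → H.Reachable (f u) (f v) := by
      intro u v huv hu
      by_cases hv : v ∈ S
      · rw [hfS v hv, hfN u hu]
        have hv' : v ∈ L u := ((hL u hu).1 v).mpr ⟨hv, huv⟩
        exact chain2 u hu _ v (List.head_mem (hne u hu)) hv'
      · rw [hfN u hu, hfN v hv]
        by_cases heq : (L u).head (hne u hu) = (L v).head (hne v hv)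
        · have : (⟨(L u).head (hne u hu), hLS u hu _ (List.head_mem (hne u hu))⟩ : ↥S)
              = ⟨(L v).head (hne v hv), hLS v hv _ (List.head_mem (hne v hv))⟩ :=
            Subtype.ext heq
          rw [this]
        · refine SimpleGraph.Adj.reachable (hadjH _ _ _ _ heq ?_)
          exact ⟨hLS u hu _ (List.head_mem _), hLS v hv _ (List.head_mem _),
            Or.inr (Or.inr ⟨u, v, hu, hv, huv,
              Or.inl ⟨List.head?_eq_head _, List.head?_eq_head _⟩⟩)⟩
    intro u v huv
    by_cases hu : u ∈ S
    · by_cases hv : v ∈ S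
      · rw [hfS u hu, hfS v hv]
        exact (hadjH u v hu hv huv.ne ⟨hu, hv, Or.inl huv⟩).reachable
      · exact (key v u huv.symm hv).symm
    · exact key u v huv hu
  have hreach : ∀ u v, G.Reachable u v → H.Reachable (f u) (f v) := by
    intro u v h
    obtain ⟨p⟩ := h
    induction p with
    | nil => exact SimpleGraph.Reachable.refl _
    | cons h p ih => exact (hstep _ _ h).trans ih
  have hnonempty : Nonempty ↥S := ⟨⟨hS.choose, hS.choose_spec⟩⟩
  refine ⟨fun x y => ?_⟩
  have hx : f ↑x = x := by rw [hfS _ x.2]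
  have hy : f ↑y = y := by rw [hfS _ y.2]
  rw [← hx, ← hy]
  exact hreach _ _ (hG ↑x ↑y)
end
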